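/- Let 0 < ξ < 2π, −π/2 < θ₁, θ₂ < π/2 with α := (θ₁+θ₂)/ξ satisfying 1 < α < 2. Let v₁ have polar angle β₁ = θ₁ + π/2 and v₂ have polar angle β₂ = −(π/2 − ξ + θ₂), with v₁, v₂ ≠ 0. Then ξ < β₁ < π, −(π−ξ) < β₂ < 0, and β₁ − β₂ > π; consequently, for any vector v₀ in the interior of the wedge S = {(r,θ) : r ≥ 0, 0 ≤ θ ≤ ξ} with v₀ ≠ 0, the closed convex hull of {a v₀ : a ≥ 0} ∪ {a v₁ : a ≥ 0} ∪ {a v₂ : a ≥ 0} equals ℝ². -/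

import Mathlib

open Real

/-- The ray `{a • v : a ≥ 0}` spanned by `v`. -/
def ray (v : EuclideanSpace ℝ (Fin 2)) : Set (EuclideanSpace ℝ (Fin 2)) :=
  {w | ∃ a : ℝ, 0 ≤ a ∧ w = a • v}

lemma combo (γ₁ γ₂ φ s r₁ r₂ : ℝ) (h12 : γ₁ < γ₂) (hlt : γ₂ - γ₁ < π)
    (h1 : γ₁ ≤ φ) (h2 : φ ≤ γ₂) (hs : 0 ≤ s) (hr₁ : 0 < r₁) (hr₂ : 0 < r₂) :
    ∃ a b : ℝ, 0 ≤ a ∧ 0 ≤ b ∧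
      a * (r₁ * Real.cos γ₁) + b * (r₂ * Real.cos γ₂) = s * Real.cos φ ∧
      a * (r₁ * Real.sin γ₁) + b * (r₂ * Real.sin γ₂) = s * Real.sin φ := by
  have hD : 0 < Real.sin (γ₂ - γ₁) :=
    Real.sin_pos_of_pos_of_lt_pi (by linarith) hlt
  have hs1 : 0 ≤ Real.sin (γ₂ - φ) :=
    Real.sin_nonneg_of_nonneg_of_le_pi (by linarith) (by linarith)
  have hs2 : 0 ≤ Real.sin (φ - γ₁) :=
    Real.sin_nonneg_of_nonneg_of_le_pi (by linarith) (by linarith)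
  have key1 : Real.sin (γ₂ - φ) * Real.cos γ₁ + Real.sin (φ - γ₁) * Real.cos γ₂
      = Real.sin (γ₂ - γ₁) * Real.cos φ := by
    rw [Real.sin_sub, Real.sin_sub, Real.sin_sub]; ring
  have key2 : Real.sin (γ₂ - φ) * Real.sin γ₁ + Real.sin (φ - γ₁) * Real.sin γ₂
      = Real.sin (γ₂ - γ₁) * Real.sin φ := by
    rw [Real.sin_sub, Real.sin_sub, Real.sin_sub]; ring
  refine ⟨s * Real.sin (γ₂ - φ) / (r₁ * Real.sin (γ₂ - γ₁)),
    s * Real.sin (φ - γ₁) / (r₂ * Real.sin (γ₂ - γ₁)), by positivity, by positivity, ?_, ?_⟩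
  · field_simp
    linear_combination s * key1
  · field_simp
    linear_combination s * key2

lemma mem_hull (v₀ v₁ v₂ w : EuclideanSpace ℝ (Fin 2)) (a b c : ℝ)
    (ha : 0 ≤ a) (hb : 0 ≤ b) (hc : 0 ≤ c)
    (h0 : w 0 = a * v₀ 0 + b * v₁ 0 + c * v₂ 0)
    (h1 : w 1 = a * v₀ 1 + b * v₁ 1 + c * v₂ 1) :
    w ∈ convexHull ℝ (ray v₀ ∪ ray v₁ ∪ ray v₂) := by
  have hw : w = a • v₀ + b • v₁ + c • v₂ := by
    ext i
    fin_cases i <;> simpa using (by assumption)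
  have hp0 : (3 * a) • v₀ ∈ convexHull ℝ (ray v₀ ∪ ray v₁ ∪ ray v₂) :=
    subset_convexHull ℝ _ (Or.inl (Or.inl ⟨3 * a, by linarith, rfl⟩))
  have hp1 : (3 * b) • v₁ ∈ convexHull ℝ (ray v₀ ∪ ray v₁ ∪ ray v₂) :=
    subset_convexHull ℝ _ (Or.inl (Or.inr ⟨3 * b, by linarith, rfl⟩))
  have hp2 : (3 * c) • v₂ ∈ convexHull ℝ (ray v₀ ∪ ray v₁ ∪ ray v₂) :=
    subset_convexHull ℝ _ (Or.inr ⟨3 * c, by linarith, rfl⟩)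
  have hconv := convex_convexHull ℝ (ray v₀ ∪ ray v₁ ∪ ray v₂)
  have hm := hconv hp0 hp1 (by norm_num : (0:ℝ) ≤ 1/2) (by norm_num : (0:ℝ) ≤ 1/2) (by norm_num)
  have hm2 := hconv hm hp2 (by norm_num : (0:ℝ) ≤ 2/3) (by norm_num : (0:ℝ) ≤ 1/3) (by norm_num)
  have : (2/3 : ℝ) • ((1/2 : ℝ) • (3 * a) • v₀ + (1/2 : ℝ) • (3 * b) • v₁)
      + (1/3 : ℝ) • (3 * c) • v₂ = w := by
    rw [hw]; module
  rwa [this] at hm2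

theorem stmt7 (ξ θ₁ θ₂ : ℝ) (hξ0 : 0 < ξ) (hξ : ξ < 2 * π)
    (hθ₁l : -(π / 2) < θ₁) (hθ₁u : θ₁ < π / 2)
    (hθ₂l : -(π / 2) < θ₂) (hθ₂u : θ₂ < π / 2)
    (hα1 : 1 < (θ₁ + θ₂) / ξ) (hα2 : (θ₁ + θ₂) / ξ < 2)
    (β₁ β₂ : ℝ) (hβ₁ : β₁ = θ₁ + π / 2) (hβ₂ : β₂ = -(π / 2 - ξ + θ₂))
    (v₁ v₂ : EuclideanSpace ℝ (Fin 2)) (hv₁ : v₁ ≠ 0) (hv₂ : v₂ ≠ 0)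
    (hv₁p : v₁ 0 = ‖v₁‖ * Real.cos β₁ ∧ v₁ 1 = ‖v₁‖ * Real.sin β₁)
    (hv₂p : v₂ 0 = ‖v₂‖ * Real.cos β₂ ∧ v₂ 1 = ‖v₂‖ * Real.sin β₂) :
    (ξ < β₁ ∧ β₁ < π) ∧ (-(π - ξ) < β₂ ∧ β₂ < 0) ∧ π < β₁ - β₂ ∧
      ∀ v₀ : EuclideanSpace ℝ (Fin 2), v₀ ≠ 0 →
        (∃ r θ : ℝ, 0 < r ∧ 0 < θ ∧ θ < ξ ∧
          v₀ 0 = r * Real.cos θ ∧ v₀ 1 = r * Real.sin θ) →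
        closure (convexHull ℝ (ray v₀ ∪ ray v₁ ∪ ray v₂)) = Set.univ := by
  have hπ : 0 < π := Real.pi_pos
  have hA1 : ξ < θ₁ + θ₂ := by
    have := (one_lt_div hξ0).mp hα1; linarith
  have hβ₁l : ξ < β₁ := by rw [hβ₁]; linarith
  have hβ₁u : β₁ < π := by rw [hβ₁]; linarith
  have hβ₂l : -(π - ξ) < β₂ := by rw [hβ₂]; linarith
  have hβ₂u : β₂ < 0 := by rw [hβ₂]; linarith
  have hgap : π < β₁ - β₂ := by rw [hβ₁, hβ₂]; linarith
  have hn1 : 0 < ‖v₁‖ := norm_pos_iff.mpr hv₁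
  have hn2 : 0 < ‖v₂‖ := norm_pos_iff.mpr hv₂
  refine ⟨⟨hβ₁l, hβ₁u⟩, ⟨hβ₂l, hβ₂u⟩, hgap, ?_⟩
  rintro v₀ hv₀ ⟨r, θ, hr, hθ0, hθξ, hw0, hw1⟩
  have hβ₂negpi : -π < β₂ := by linarith
  have hgap2 : β₁ - β₂ < 2 * π := by linarith
  have hθβ₁ : θ < β₁ := by linarith
  have hβ₂θ : β₂ < θ := by linarith
  suffices h : convexHull ℝ (ray v₀ ∪ ray v₁ ∪ ray v₂) = Set.univ by
    rw [h, closure_univ]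
  apply Set.eq_univ_of_univ_subset
  intro w _
  set z : ℂ := ⟨w 0, w 1⟩ with hz
  have hzre : ‖z‖ * Real.cos (Complex.arg z) = w 0 := Complex.norm_mul_cos_arg z
  have hzim : ‖z‖ * Real.sin (Complex.arg z) = w 1 := Complex.norm_mul_sin_arg z
  set s : ℝ := ‖z‖
  set φ : ℝ := Complex.arg z
  have hs : 0 ≤ s := norm_nonneg z
  have hφl : -π < φ := Complex.neg_pi_lt_arg z
  have hφu : φ ≤ π := Complex.arg_le_pi z
  rcases le_or_gt φ β₂ with hc1 | hc1
  · -- between β₁ - 2π and β₂ : use v₁ (at angle β₁ - 2π) and v₂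
    obtain ⟨a, b, ha, hb, e0, e1⟩ := combo (β₁ - 2 * π) β₂ φ s ‖v₁‖ ‖v₂‖
      (by linarith) (by linarith) (by linarith) hc1 hs hn1 hn2
    rw [Real.cos_sub_two_pi] at e0
    rw [Real.sin_sub_two_pi] at e1
    exact mem_hull v₀ v₁ v₂ w 0 a b le_rfl ha hb
      (by rw [← hzre, hv₁p.1, hv₂p.1]; linarith)
      (by rw [← hzim, hv₁p.2, hv₂p.2]; linarith)
  · rcases le_or_gt φ θ with hc2 | hc2
    · -- between β₂ and θ : use v₂ and v₀
      obtain ⟨a, b, ha, hb, e0, e1⟩ := combo β₂ θ φ s ‖v₂‖ r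
        (by linarith) (by linarith) hc1.le hc2 hs hn2 hr
      exact mem_hull v₀ v₁ v₂ w b 0 a hb le_rfl ha
        (by rw [← hzre, hv₂p.1, hw0]; linarith)
        (by rw [← hzim, hv₂p.2, hw1]; linarith)
    · rcases le_or_gt φ β₁ with hc3 | hc3
      · -- between θ and β₁ : use v₀ and v₁
        obtain ⟨a, b, ha, hb, e0, e1⟩ := combo θ β₁ φ s r ‖v₁‖
          (by linarith) (by linarith) hc2.le hc3 hs hr hn1
        exact mem_hull v₀ v₁ v₂ w a b 0 ha hb le_rfl
          (by rw [← hzre, hv₁p.1, hw0]; linarith)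
          (by rw [← hzim, hv₁p.2, hw1]; linarith)
      · -- between β₁ and β₂ + 2π : use v₁ and v₂
        obtain ⟨a, b, ha, hb, e0, e1⟩ := combo β₁ (β₂ + 2 * π) φ s ‖v₁‖ ‖v₂‖
          (by linarith) (by linarith) hc3.le (by linarith) hs hn1 hn2
        rw [Real.cos_add_two_pi] at e0
        rw [Real.sin_add_two_pi] at e1
        exact mem_hull v₀ v₁ v₂ w 0 a b le_rfl ha hb
          (by rw [← hzre, hv₁p.1, hv₂p.1]; linarith)
          (by rw [← hzim, hv₁p.2, hv₂p.2]; linarith)
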